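/- arXiv:1407.4426 — 2 statements merged into one kernel-verified Lean document; each statement's English description precedes it below -/
import Mathlib

section
/- Let G be a finite cyclic-by-abelian group with a maximal cyclic normal subgroup C such that every faithful irreducible complex character of G is induced from a faithful linear character of C. Then all faithful irreducible characters of G form a single Galois conjugacy class: for any two faithful irreducible characters χ, φ of G there exists a Galois automorphism σ of ℚ(ζ_{|G|})/ℚ with φ = χ^σ. -/
open scoped TensorProduct

/-- `A` is the cyclic algebra `(L/K, σ, a)`. -/
def IsCyclicAlgebra (K : Type*) [Field K] (L : Type*) [Field L] [Algebra K L]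
    (σ : L ≃ₐ[K] L) (a : L) (A : Type*) [Ring A] [Algebra K A] : Prop :=
  ∃ (ι : L →ₐ[K] A) (u : Aˣ),
    (u : A) ^ Module.finrank K L = ι a ∧
    (∀ x : L, (u : A) * ι x = ι (σ x) * (u : A)) ∧
    Function.Bijective fun f : Fin (Module.finrank K L) → L =>
      ∑ i, ι (f i) * (u : A) ^ (i : ℕ)

/-- The Schur index of a central simple `K`-algebra. -/
noncomputable def schurIndex (K A : Type*) [Field K] [Ring A] [Algebra K A] : ℕ :=
  sInf {m | ∃ (D : Type) (_ : DivisionRing D) (_ : Algebra K D) (r : ℕ),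
      Nonempty (A ≃ₐ[K] Matrix (Fin r) (Fin r) D) ∧ m * m = Module.finrank K D}

/-- Local index at a real embedding. -/
noncomputable def realLocalIndex (K A : Type*) [Field K] [Ring A] [Algebra K A]
    (φ : K →+* ℝ) : ℕ :=
  letI := φ.toAlgebra
  schurIndex ℝ (ℝ ⊗[K] A)

def IsBrauerEquiv (K A B : Type*) [Field K] [Ring A] [Algebra K A] [Ring B] [Algebra K B] :
    Prop :=
  ∃ r s : ℕ, 0 < r ∧ 0 < s ∧
    Nonempty (Matrix (Fin r) (Fin r) A ≃ₐ[K] Matrix (Fin s) (Fin s) B)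

/-- The simple component `Re` of `R`, realized as `R/(1-e)`. -/
abbrev simpleComponent (R : Type*) [Ring R] (e : R) : Type _ :=
  (TwoSidedIdeal.span {1 - e}).ringCon.Quotient

noncomputable instance (F R : Type*) [CommSemiring F] [Ring R] [Algebra F R] (e : R) :
    Algebra F (simpleComponent R e) :=
  RingHom.toAlgebra' ((TwoSidedIdeal.span {1 - e}).ringCon.mk'.comp (algebraMap F R)) <| by
    intro c x
    induction x using Quotient.inductionOn' with
    | h x =>
        show ((algebraMap F R c : R) : simpleComponent R e) * (x : simpleComponent R e)
          = (x : simpleComponent R e) * ((algebraMap F R c : R) : simpleComponent R e)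
        rw [← RingCon.coe_mul, ← RingCon.coe_mul, Algebra.commutes]

/-- `e` is a centrally primitive idempotent. -/
def IsCentrallyPrimitiveIdempotent (R : Type*) [Ring R] (e : R) : Prop :=
  e ∈ Subring.center R ∧ e * e = e ∧ e ≠ 0 ∧
    ∀ a b : R, a ∈ Subring.center R → b ∈ Subring.center R → a * a = a → b * b = b →
      a * b = 0 → e = a + b → a = 0 ∨ b = 0


open Classical in
/-- The character of `G` induced from the class function `lam` on the subgroup `C`. -/
noncomputable def inducedChar {G : Type*} [Group G] [Fintype G] (C : Subgroup G)
    (lam : C → ℂ) : G → ℂ := fun g =>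
  (Nat.card C : ℂ)⁻¹ * ∑ x : G, if h : x⁻¹ * g * x ∈ C then lam ⟨x⁻¹ * g * x, h⟩ else 0


set_option maxHeartbeats 2000000 in
theorem schur_stmt15 (G : Type) [Group G] [Fintype G]
    (hcyab : ∃ (N : Subgroup G) (_ : N.Normal), IsCyclic N ∧ ∀ x y : G ⧸ N, x * y = y * x)
    (C : Subgroup G) [C.Normal] (hC : IsCyclic C)
    (hmax : ∀ C' : Subgroup G, C'.Normal → IsCyclic C' → C ≤ C' → C' = C)
    (hind : ∀ V : FDRep ℂ G, CategoryTheory.Simple V → Function.Injective ⇑V.ρ →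
      ∃ lam : C →* ℂˣ, Function.Injective ⇑lam ∧
        ∀ g : G, V.character g = inducedChar C (fun c => (lam c : ℂ)) g)
    (ζ : ℂ) (hζ : IsPrimitiveRoot ζ (Nat.card G))
    (hval : ∀ (V : FDRep ℂ G) (g : G), V.character g ∈ IntermediateField.adjoin ℚ {ζ})
    (V W : FDRep ℂ G) (hVs : CategoryTheory.Simple V) (hWs : CategoryTheory.Simple W)
    (hVf : Function.Injective ⇑V.ρ) (hWf : Function.Injective ⇑W.ρ) :
    ∃ σ : IntermediateField.adjoin ℚ {ζ} ≃ₐ[ℚ] IntermediateField.adjoin ℚ {ζ},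
      ∀ g : G, W.character g = (σ ⟨V.character g, hval V g⟩ : ℂ) := by

  classical
  have hn0 : 0 < Nat.card G := Nat.card_pos
  haveI : NeZero (Nat.card G) := ⟨hn0.ne'⟩
  set n : ℕ := Nat.card G with hn
  set nP : ℕ+ := ⟨n, hn0⟩ with hnP
  obtain ⟨lamV, hVinj, hVchar⟩ := hind V hVs hVf
  obtain ⟨lamW, hWinj, hWchar⟩ := hind W hWs hWf
  set m : ℕ := Nat.card C with hm
  have hm0 : 0 < m := Nat.card_pos
  haveI : NeZero m := ⟨hm0.ne'⟩
  have hmn : m ∣ n := Subgroup.card_subgroup_dvd_card C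
  -- step 1: lamW = lamV ^ k with k coprime to m
  obtain ⟨c0, hc0⟩ := hC.exists_generator
  have hc0ord : orderOf c0 = m := orderOf_eq_card_of_forall_mem_zpowers hc0
  have hVu : IsPrimitiveRoot (lamV c0) m := by
    have := IsPrimitiveRoot.orderOf (lamV c0)
    rwa [orderOf_injective lamV hVinj, hc0ord] at this
  have hWu : IsPrimitiveRoot (lamW c0) m := by
    have := IsPrimitiveRoot.orderOf (lamW c0)
    rwa [orderOf_injective lamW hWinj, hc0ord] at this
  obtain ⟨k, hkm, hkcop, hk⟩ := (hVu.isPrimitiveRoot_iff').mp hWu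
  have hkall : ∀ c : C, lamV c ^ k = lamW c := by
    intro c
    obtain ⟨j, hj⟩ := hc0 c
    rw [← hj, map_zpow, map_zpow, ← hk]
    rw [← zpow_natCast (lamV c0 ^ j) k, ← zpow_natCast (lamV c0) k, ← zpow_mul, ← zpow_mul,
      mul_comm]
  -- step 2: lift k to a unit of ZMod n
  obtain ⟨u, hu⟩ := ZMod.unitsMap_surjective hmn (ZMod.unitOfCoprime k hkcop)
  set K : ℕ := ((u : ZMod n)).val with hK
  have hKk : K ≡ k [MOD m] := by
    have h1 : (ZMod.castHom hmn (ZMod m)) (u : ZMod n) = ((k : ℕ) : ZMod m) := by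
      have := congrArg (Units.val) hu
      simpa [ZMod.unitsMap_def] using this
    have h2 : ((K : ℕ) : ZMod m) = ((k : ℕ) : ZMod m) := by
      rwa [hK, ZMod.natCast_val, ← ZMod.castHom_apply (h := hmn)]
    exact (ZMod.natCast_eq_natCast_iff _ _ _).mp h2
  have hKall : ∀ c : C, lamV c ^ K = lamW c := by
    intro c
    have hcm : lamV c ^ m = 1 := by
      rw [← map_pow]
      have : c ^ m = 1 := pow_card_eq_one'
      rw [this, map_one]
    have hdvd : orderOf (lamV c) ∣ m := orderOf_dvd_of_pow_eq_one hcm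
    rw [← hkall c]
    exact pow_eq_pow_iff_modEq.mpr (hKk.of_dvd hdvd)
  -- step 3: cyclotomic extension and the automorphism
  have hζ' : IsPrimitiveRoot ζ (nP : ℕ) := hζ
  have hζint : IsIntegral ℚ ζ := (hζ'.isIntegral nP.pos).tower_top
  haveI hcyc : IsCyclotomicExtension {(nP : ℕ)} ℚ (IntermediateField.adjoin ℚ {ζ}) := by
    haveI := hζ'.adjoin_isCyclotomicExtension ℚ
    have h1 := IntermediateField.adjoin_simple_toSubalgebra_of_isAlgebraic hζint.isAlgebraic
    exact IsCyclotomicExtension.equiv _ ℚ _ (Subalgebra.equivOfEq _ _ h1.symm)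
  set L := IntermediateField.adjoin ℚ {ζ} with hL
  have irr : Irreducible (Polynomial.cyclotomic (nP : ℕ) ℚ) :=
    Polynomial.cyclotomic.irreducible_rat nP.pos
  set σ : L ≃ₐ[ℚ] L := (IsCyclotomicExtension.autEquivPow L irr).symm u with hσ
  have hζ0 := IsCyclotomicExtension.zeta_spec nP ℚ L
  have hσζ : σ (IsCyclotomicExtension.zeta nP ℚ L) =
      IsCyclotomicExtension.zeta nP ℚ L ^ K := by
    have h1 : (hζ0.autToPow ℚ) σ = u := by
      have h0 := (IsCyclotomicExtension.autEquivPow L irr).apply_symm_apply u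
      rw [IsCyclotomicExtension.autEquivPow_apply] at h0
      exact h0
    have h2 := hζ0.autToPow_spec ℚ σ
    rw [h1] at h2
    exact h2.symm
  have key : ∀ z : L, z ^ (n : ℕ) = 1 → σ z = z ^ K := by
    intro z hz
    obtain ⟨t, _, ht⟩ := hζ0.eq_pow_of_pow_eq_one hz
    rw [← ht, map_pow, hσζ, ← pow_mul, mul_comm, pow_mul]
  -- step 4: values of lamV inside L
  have hlamm : ∀ c : C, ((lamV c : ℂˣ) : ℂ) ^ m = 1 := by
    intro c
    have h1 : lamV c ^ m = 1 := by
      rw [← map_pow]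
      have hcm : c ^ m = 1 := pow_card_eq_one'
      rw [hcm, map_one]
    rw [← Units.val_pow_eq_pow_val, h1, Units.val_one]
  have hlamn : ∀ c : C, ((lamV c : ℂˣ) : ℂ) ^ n = 1 := by
    intro c
    obtain ⟨d, hd⟩ := hmn
    rw [hd, pow_mul, hlamm c, one_pow]
  have hmemV : ∀ c : C, ((lamV c : ℂˣ) : ℂ) ∈ L := by
    intro c
    obtain ⟨t, _, ht⟩ := hζ.eq_pow_of_pow_eq_one (hlamn c)
    rw [← ht]
    exact pow_mem (IntermediateField.mem_adjoin_simple_self ℚ ζ) t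
  set lV : C → L := fun c => ⟨lamV c, hmemV c⟩ with hlV
  have hpowV : ∀ c : C, lV c ^ n = 1 := by
    intro c
    apply Subtype.ext
    rw [IntermediateField.coe_pow]
    exact hlamn c
  have hKC : ∀ c : C, ((lamV c : ℂˣ) : ℂ) ^ K = ((lamW c : ℂˣ) : ℂ) := by
    intro c
    rw [← Units.val_pow_eq_pow_val, hKall c]
  -- step 5: final computation
  refine ⟨σ, fun g => ?_⟩
  set SV : L := (m : L)⁻¹ *
      ∑ x : G, if h : x⁻¹ * g * x ∈ C then lV ⟨x⁻¹ * g * x, h⟩ else 0 with hSV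
  have hSVval : ((SV : L) : ℂ) = V.character g := by
    rw [hVchar g]
    unfold inducedChar
    have e1 : (((m : L) : ℂ)) = (m : ℂ) := map_natCast (algebraMap L ℂ) m
    rw [hSV, MulMemClass.coe_mul, IntermediateField.coe_sum, IntermediateField.coe_inv, e1]
    congr 1
    apply Finset.sum_congr rfl
    intro x _
    rw [apply_dite (fun y : L => (y : ℂ))]
    by_cases h : x⁻¹ * g * x ∈ C
    · simp [h, hlV]
    · simp [h]
  have hsub : (⟨V.character g, hval V g⟩ : L) = SV := Subtype.ext hSVval.symm
  rw [hsub]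
  have hσSV : σ SV = (m : L)⁻¹ *
      ∑ x : G, if h : x⁻¹ * g * x ∈ C then lV ⟨x⁻¹ * g * x, h⟩ ^ K else 0 := by
    rw [hSV, map_mul, map_inv₀, map_natCast, map_sum]
    congr 1
    apply Finset.sum_congr rfl
    intro x _
    rw [apply_dite σ]
    by_cases h : x⁻¹ * g * x ∈ C
    · simp only [dif_pos h]
      exact key _ (hpowV _)
    · simp only [dif_neg h, map_zero]
  rw [hσSV, hWchar g]
  unfold inducedChar
  have e1 : (((m : L) : ℂ)) = (m : ℂ) := map_natCast (algebraMap L ℂ) m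
  rw [MulMemClass.coe_mul, IntermediateField.coe_sum, IntermediateField.coe_inv, e1]
  congr 1
  apply Finset.sum_congr rfl
  intro x _
  rw [apply_dite (fun y : L => (y : ℂ))]
  by_cases h : x⁻¹ * g * x ∈ C
  · simp only [dif_pos h, IntermediateField.coe_pow]
    exact (hKC _).symm
  · simp [h]
end

section
/- Consider the crossed product algebra A = ⊕_{i,j} L u^i v^j over F with L = F(ζ_n), where u^{a_1} = ζ_n^{c_1}, uζ_n = ζ_n^{b_1}u, v^{a_2} = ζ_n^{c_2}, vζ_n = ζ_n^{b_2}v, and vu = uvζ_n^d, with Gal(L/F) = ⟨σ_{b_1}⟩ × ⟨σ_{b_2}⟩. If c ∈ L^× satisfies σ_{b_2}(c)·ζ_n^{d·b_1·b_2} = c and (cu)^{a_1} ∈ F^×, then A is isomorphic as an F-algebra to the tensor product of cyclic algebras (L^{⟨σ_{b_2}⟩}/F, σ, (cu)^{a_1}) ⊗_F (L^{⟨σ_{b_1}⟩}/F, φ, v^{a_2}), where σ, φ are the automorphisms induced by σ_{b_1}, σ_{b_2} on the respective fixed fields. -/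
open scoped TensorProduct

lemma pow_comm_aux {F K A : Type*} [Field F] [Field K] [Algebra F K] [Ring A] [Algebra F A]
    (ι : K →ₐ[F] A) (σ : K ≃ₐ[F] K) (t : A) (h : ∀ x : K, t * ι x = ι (σ x) * t) :
    ∀ (k : ℕ) (x : K), t ^ k * ι x = ι ((σ ^ k) x) * t ^ k := by
  intro k
  induction k with
  | zero => intro x; simp
  | succ k IH =>
    intro x
    rw [pow_succ, mul_assoc, h, ← mul_assoc, IH, pow_succ, mul_assoc, AlgEquiv.mul_apply]

lemma basis_equiv_aux {F K A : Type*} [Field F] [Field K] [Algebra F K] [Ring A] [Algebra F A]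
    {ιt : Type*} [Fintype ιt] (ι : K →ₐ[F] A) (q : ιt → A)
    (hbij : Function.Bijective fun f : ιt → K => ∑ i, ι (f i) * q i) :
    Nonempty ((ιt → K) ≃ₗ[F] A) := by
  let Φ : (ιt → K) →ₗ[F] A :=
    { toFun := fun f => ∑ i, ι (f i) * q i
      map_add' := by intro f g; simp [map_add, add_mul, Finset.sum_add_distrib]
      map_smul' := by
        intro r f
        simp [Finset.smul_sum, Algebra.smul_def, mul_assoc, Finset.mul_sum] }
  exact ⟨LinearEquiv.ofBijective Φ hbij⟩

lemma crossed_lift {F : Type*} [Field F] {K B A : Type*} [Field K] [Algebra F K]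
    [Ring B] [Algebra F B] [Ring A] [Algebra F A]
    {m : ℕ} (hm : 0 < m)
    (ι : K →ₐ[F] B) (u : Bˣ) (σ : K ≃ₐ[F] K) (a : K)
    (hu1 : (u : B) ^ m = ι a)
    (hu2 : ∀ x : K, (u : B) * ι x = ι (σ x) * (u : B))
    (hbij : Function.Bijective fun f : Fin m → K => ∑ i, ι (f i) * (u : B) ^ (i : ℕ))
    (j : K →ₐ[F] A) (U : A)
    (hU1 : U ^ m = j a)
    (hU2 : ∀ x : K, U * j x = j (σ x) * U) :
    ∃ f : B →ₐ[F] A, (∀ x : K, f (ι x) = j x) ∧ f u = U := by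
  -- power commutation rules
  have hupow : ∀ (k : ℕ) (x : K), (u : B) ^ k * ι x = ι ((σ ^ k) x) * (u : B) ^ k := by
    intro k; induction k with
    | zero => intro x; simp
    | succ k IH =>
      intro x
      rw [pow_succ, mul_assoc, hu2, ← mul_assoc, IH, pow_succ, mul_assoc,
        AlgEquiv.mul_apply]
  have hUpow : ∀ (k : ℕ) (x : K), U ^ k * j x = j ((σ ^ k) x) * U ^ k := by
    intro k; induction k with
    | zero => intro x; simp
    | succ k IH =>
      intro x
      rw [pow_succ, mul_assoc, hU2, ← mul_assoc, IH, pow_succ, mul_assoc,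
        AlgEquiv.mul_apply]
  -- the linear maps
  let Φ : (Fin m → K) →ₗ[F] B :=
    { toFun := fun f => ∑ i, ι (f i) * (u : B) ^ (i : ℕ)
      map_add' := by
        intro f g
        simp [map_add, add_mul, Finset.sum_add_distrib]
      map_smul' := by
        intro c f
        simp [Finset.smul_sum, Algebra.smul_def, mul_assoc, Finset.mul_sum] }
  let Ψ : (Fin m → K) →ₗ[F] A :=
    { toFun := fun f => ∑ i, j (f i) * U ^ (i : ℕ)
      map_add' := by
        intro f g
        simp [map_add, add_mul, Finset.sum_add_distrib]
      map_smul' := by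
        intro c f
        simp [Finset.smul_sum, Algebra.smul_def, mul_assoc, Finset.mul_sum] }
  have hΦbij : Function.Bijective Φ := hbij
  let e : B ≃ₗ[F] (Fin m → K) := (LinearEquiv.ofBijective Φ hΦbij).symm
  let f₀ : B →ₗ[F] A := Ψ ∘ₗ (e : B →ₗ[F] (Fin m → K))
  have hf₀Φ : ∀ g : Fin m → K, f₀ (Φ g) = Ψ g := by
    intro g
    have : e (Φ g) = g := (LinearEquiv.ofBijective Φ hΦbij).symm_apply_apply g
    simp only [f₀, LinearMap.comp_apply, LinearEquiv.coe_coe, this]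
  have hsingle : ∀ (s : Fin m) (z : K),
      f₀ (ι z * (u : B) ^ (s : ℕ)) = j z * U ^ (s : ℕ) := by
    intro s z
    have h1 : Φ (Pi.single s z) = ι z * (u : B) ^ (s : ℕ) := by
      simp only [Φ, LinearMap.coe_mk, AddHom.coe_mk]
      rw [Fintype.sum_eq_single s (fun i hi => by
        rw [Pi.single_eq_of_ne hi, map_zero, zero_mul]), Pi.single_eq_same]
    have h2 : Ψ (Pi.single s z) = j z * U ^ (s : ℕ) := by
      simp only [Ψ, LinearMap.coe_mk, AddHom.coe_mk]
      rw [Fintype.sum_eq_single s (fun i hi => by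
        rw [Pi.single_eq_of_ne hi, map_zero, zero_mul]), Pi.single_eq_same]
    rw [← h1, hf₀Φ, h2]
  have hC : ∀ (s : ℕ) (z : K), f₀ (ι z * (u : B) ^ s) = j z * U ^ s := by
    intro s
    induction s using Nat.strong_induction_on with
    | _ s IH =>
      intro z
      rcases lt_or_ge s m with h | h
      · exact hsingle ⟨s, h⟩ z
      · have hs : s = (s - m) + m := by omega
        have hlt : s - m < s := by omega
        have hu' : (u : B) ^ s = ι ((σ ^ (s - m)) a) * (u : B) ^ (s - m) := by
          conv_lhs => rw [hs]
          rw [pow_add, hu1, hupow]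
        have hU' : U ^ s = j ((σ ^ (s - m)) a) * U ^ (s - m) := by
          conv_lhs => rw [hs]
          rw [pow_add, hU1, hUpow]
        rw [hu', ← mul_assoc, ← map_mul, IH _ hlt, map_mul, hU', mul_assoc]
  have hf₀mul : ∀ b b' : B, f₀ (b * b') = f₀ b * f₀ b' := by
    intro b b'
    obtain ⟨g, rfl⟩ := hΦbij.2 b
    obtain ⟨g', rfl⟩ := hΦbij.2 b'
    have expand : Φ g * Φ g' = ∑ i : Fin m, ∑ i' : Fin m,
        ι (g i * (σ ^ (i : ℕ)) (g' i')) * (u : B) ^ ((i : ℕ) + (i' : ℕ)) := by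
      show (∑ i, ι (g i) * (u : B) ^ (i : ℕ)) * (∑ i', ι (g' i') * (u : B) ^ (i' : ℕ)) = _
      rw [Finset.sum_mul_sum]
      refine Finset.sum_congr rfl fun i _ => Finset.sum_congr rfl fun i' _ => ?_
      simp only [map_mul, pow_add, mul_assoc]
      rw [← mul_assoc ((u : B) ^ (i : ℕ)), hupow, mul_assoc]
    have hR : (Ψ g) * (Ψ g') = ∑ i : Fin m, ∑ i' : Fin m,
        j (g i * (σ ^ (i : ℕ)) (g' i')) * U ^ ((i : ℕ) + (i' : ℕ)) := by
      show (∑ i, j (g i) * U ^ (i : ℕ)) * (∑ i', j (g' i') * U ^ (i' : ℕ)) = _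
      rw [Finset.sum_mul_sum]
      refine Finset.sum_congr rfl fun i _ => Finset.sum_congr rfl fun i' _ => ?_
      simp only [map_mul, pow_add, mul_assoc]
      rw [← mul_assoc (U ^ (i : ℕ)), hUpow, mul_assoc]
    rw [expand, map_sum, hf₀Φ g, hf₀Φ g', hR]
    refine Finset.sum_congr rfl fun i _ => ?_
    rw [map_sum]
    exact Finset.sum_congr rfl fun i' _ => hC _ _
  have hone : f₀ 1 = 1 := by
    have h1 : (1 : B) = ι 1 * (u : B) ^ 0 := by simp
    rw [h1, hC 0 1]
    simp
  refine ⟨AlgHom.ofLinearMap f₀ hone hf₀mul, fun x => ?_, ?_⟩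
  · show f₀ (ι x) = j x
    have h1 : ι x = ι x * (u : B) ^ 0 := by simp
    rw [h1, hC]
    simp
  · show f₀ (u : B) = U
    have h1 : (u : B) = ι 1 * (u : B) ^ 1 := by simp
    rw [h1, hC]
    simp


/-- `A` is the crossed product `⊕ L uⁱ vʲ` with the given relations. -/
def IsTwoGenCrossedProduct (F : Type*) [Field F] (L : Type*) [Field L] [Algebra F L]
    (σ₁ σ₂ : L ≃ₐ[F] L) (x₁ x₂ y : L) (A : Type*) [Ring A] [Algebra F A] : Prop :=
  ∃ (ι : L →ₐ[F] A) (u v : Aˣ),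
    (u : A) ^ orderOf σ₁ = ι x₁ ∧ (v : A) ^ orderOf σ₂ = ι x₂ ∧
    (∀ x : L, (u : A) * ι x = ι (σ₁ x) * (u : A)) ∧
    (∀ x : L, (v : A) * ι x = ι (σ₂ x) * (v : A)) ∧
    ((v : A) * (u : A) = (u : A) * (v : A) * ι y) ∧
    Function.Bijective fun f : Fin (orderOf σ₁) × Fin (orderOf σ₂) → L =>
      ∑ ij, ι (f ij) * (u : A) ^ (ij.1 : ℕ) * (v : A) ^ (ij.2 : ℕ)


set_option maxHeartbeats 1000000 in
theorem schur_stmt19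
    (F : Type) [Field F] [NumberField F] [IsGalois ℚ F]
    (hab : ∀ g h : F ≃ₐ[ℚ] F, g * h = h * g)
    (n : ℕ+) (L : Type) [Field L] [Algebra F L] [IsCyclotomicExtension {(n : ℕ)} F L]
    (ζ : L) (hζ : IsPrimitiveRoot ζ (n : ℕ))
    (σ₁ σ₂ : L ≃ₐ[F] L) (b₁ b₂ c₁ c₂ d : ℕ)
    (h1 : σ₁ ζ = ζ ^ b₁) (h2 : σ₂ ζ = ζ ^ b₂)
    (hGal : ∀ τ : L ≃ₐ[F] L, ∃! ij : Fin (orderOf σ₁) × Fin (orderOf σ₂),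
      τ = σ₁ ^ (ij.1 : ℕ) * σ₂ ^ (ij.2 : ℕ))
    (A : Type) [Ring A] [Algebra F A]
    (hA : IsTwoGenCrossedProduct F L σ₁ σ₂ (ζ ^ c₁) (ζ ^ c₂) (ζ ^ d) A)
    (c : L) (hc0 : c ≠ 0) (hcrel : σ₂ c * ζ ^ (d * b₁ * b₂) = c)
    (hcuF : (∏ i ∈ Finset.range (orderOf σ₁), (σ₁ ^ i) c) * ζ ^ c₁ ∈
      Set.range (algebraMap F L))
    (K₁ : IntermediateField F L) (hK₁ : K₁ = IntermediateField.fixedField (Subgroup.zpowers σ₂))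
    (K₂ : IntermediateField F L) (hK₂ : K₂ = IntermediateField.fixedField (Subgroup.zpowers σ₁))
    (σ : K₁ ≃ₐ[F] K₁) (hσ : ∀ x : K₁, (algebraMap K₁ L) (σ x) = σ₁ (algebraMap K₁ L x))
    (φ : K₂ ≃ₐ[F] K₂) (hφ : ∀ x : K₂, (algebraMap K₂ L) (φ x) = σ₂ (algebraMap K₂ L x))
    (w₁ : K₁) (hw₁ : (algebraMap K₁ L) w₁ =
      (∏ i ∈ Finset.range (orderOf σ₁), (σ₁ ^ i) c) * ζ ^ c₁)
    (w₂ : K₂) (hw₂ : (algebraMap K₂ L) w₂ = ζ ^ c₂) :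
    ∀ (B₁ B₂ : Type) [Ring B₁] [Algebra F B₁] [Ring B₂] [Algebra F B₂],
      IsCyclicAlgebra F K₁ σ w₁ B₁ → IsCyclicAlgebra F K₂ φ w₂ B₂ →
        Nonempty (A ≃ₐ[F] (B₁ ⊗[F] B₂)) := by
  intro B₁ B₂ _ _ _ _ hB₁ hB₂
  classical
  haveI hGalois : IsGalois F L := IsCyclotomicExtension.isGalois {(n : ℕ)} F L
  haveI hFD : FiniteDimensional F L := IsCyclotomicExtension.finiteDimensional {(n : ℕ)} F L
  have ha₁pos : 0 < orderOf σ₁ := orderOf_pos σ₁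
  have ha₂pos : 0 < orderOf σ₂ := orderOf_pos σ₂
  have hψ : Function.Bijective (fun ij : Fin (orderOf σ₁) × Fin (orderOf σ₂) =>
      σ₁ ^ (ij.1 : ℕ) * σ₂ ^ (ij.2 : ℕ)) := by
    rw [Function.bijective_iff_existsUnique]
    intro τ
    obtain ⟨ij, hij, huniq⟩ := hGal τ
    exact ⟨ij, hij.symm, fun y hy => huniq y hy.symm⟩
  have hcard : Fintype.card (L ≃ₐ[F] L) = orderOf σ₁ * orderOf σ₂ := by
    rw [← Fintype.card_of_bijective hψ, Fintype.card_prod, Fintype.card_fin, Fintype.card_fin]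
  have hrankL : Module.finrank F L = orderOf σ₁ * orderOf σ₂ := by
    rw [← IsGalois.card_aut_eq_finrank, Nat.card_eq_fintype_card, hcard]
  have hrankK₁L : Module.finrank K₁ L = orderOf σ₂ := by
    rw [hK₁, IntermediateField.finrank_fixedField_eq_card,
      Nat.card_zpowers]
  have hrankK₂L : Module.finrank K₂ L = orderOf σ₁ := by
    rw [hK₂, IntermediateField.finrank_fixedField_eq_card,
      Nat.card_zpowers]
  have hrankK₁ : Module.finrank F K₁ = orderOf σ₁ := by
    have h := Module.finrank_mul_finrank F K₁ L
    rw [hrankK₁L, hrankL] at h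
    exact Nat.eq_of_mul_eq_mul_right ha₂pos h
  have hrankK₂ : Module.finrank F K₂ = orderOf σ₂ := by
    have h := Module.finrank_mul_finrank F K₂ L
    rw [hrankK₂L, hrankL, mul_comm (orderOf σ₁) (orderOf σ₂)] at h
    exact Nat.eq_of_mul_eq_mul_right ha₁pos h
  -- fixed point facts
  have hfixσ₂ : ∀ x : K₁, σ₂ ((algebraMap K₁ L) x) = (algebraMap K₁ L) x := by
    intro x
    have hx : (x : L) ∈ IntermediateField.fixedField (Subgroup.zpowers σ₂) := hK₁ ▸ x.2
    exact hx ⟨σ₂, Subgroup.mem_zpowers σ₂⟩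
  have hfixσ₁ : ∀ y : K₂, σ₁ ((algebraMap K₂ L) y) = (algebraMap K₂ L) y := by
    intro y
    have hy : (y : L) ∈ IntermediateField.fixedField (Subgroup.zpowers σ₁) := hK₂ ▸ y.2
    exact hy ⟨σ₁, Subgroup.mem_zpowers σ₁⟩
  obtain ⟨ι, u, v, hu1, hv1, hu2, hv2, hvu, hAbij⟩ := hA
  obtain ⟨ι₁, u₁, hu₁1, hu₁2, hB₁bij⟩ := hB₁
  obtain ⟨ι₂, u₂, hu₂1, hu₂2, hB₂bij⟩ := hB₂
  have hupowA := pow_comm_aux ι σ₁ (u : A) hu2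
  have hvpowA := pow_comm_aux ι σ₂ (v : A) hv2
  -- the modified generator u' = ι c * u
  have hu'pow : ∀ k : ℕ, (ι c * (u : A)) ^ k =
      ι (∏ i ∈ Finset.range k, (σ₁ ^ i) c) * (u : A) ^ k := by
    intro k
    induction k with
    | zero => simp
    | succ k IH =>
      rw [pow_succ, IH, Finset.prod_range_succ, map_mul, pow_succ]
      simp only [mul_assoc]
      rw [← mul_assoc ((u : A) ^ k), hupowA k c, mul_assoc]
  -- algebra maps into A
  set j₁ : K₁ →ₐ[F] A := ι.comp K₁.val with hj₁def
  set j₂ : K₂ →ₐ[F] A := ι.comp K₂.val with hj₂def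
  have hj₁app : ∀ x : K₁, j₁ x = ι ((algebraMap K₁ L) x) := fun x => rfl
  have hj₂app : ∀ y : K₂, j₂ y = ι ((algebraMap K₂ L) y) := fun y => rfl
  -- relations for the first cyclic factor
  have hU1' : (ι c * (u : A)) ^ Module.finrank F K₁ = j₁ w₁ := by
    rw [hrankK₁, hu'pow, hu1, ← map_mul, hj₁app, hw₁]
  have hU2' : ∀ x : K₁, (ι c * (u : A)) * j₁ x = j₁ (σ x) * (ι c * (u : A)) := by
    intro x
    rw [hj₁app, hj₁app, hσ x, mul_assoc, hu2, ← mul_assoc, ← map_mul,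
      mul_comm c (σ₁ ((algebraMap K₁ L) x)), map_mul, mul_assoc]
  have hmK₁ : 0 < Module.finrank F K₁ := by rw [hrankK₁]; exact ha₁pos
  obtain ⟨f₁, hf₁ι, hf₁u⟩ := crossed_lift hmK₁ ι₁ u₁ σ w₁ hu₁1 hu₁2 hB₁bij
    j₁ (ι c * (u : A)) hU1' hU2'
  -- relations for the second cyclic factor
  have hV1' : (v : A) ^ Module.finrank F K₂ = j₂ w₂ := by
    rw [hrankK₂, hv1, hj₂app, hw₂]
  have hV2' : ∀ y : K₂, (v : A) * j₂ y = j₂ (φ y) * (v : A) := by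
    intro y
    rw [hj₂app, hj₂app, hφ y, hv2]
  have hmK₂ : 0 < Module.finrank F K₂ := by rw [hrankK₂]; exact ha₂pos
  obtain ⟨f₂, hf₂ι, hf₂u⟩ := crossed_lift hmK₂ ι₂ u₂ φ w₂ hu₂1 hu₂2 hB₂bij
    j₂ (v : A) hV1' hV2'
  -- commutation facts
  have hcIL : ∀ x y : L, Commute (ι x) (ι y) := by
    intro x y
    show ι x * ι y = ι y * ι x
    rw [← map_mul, ← map_mul, mul_comm]
  have hζpow : σ₁ (σ₂ (ζ ^ d)) = ζ ^ (d * b₁ * b₂) := by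
    rw [map_pow, h2, ← pow_mul, map_pow, h1, ← pow_mul]
    congr 1
    ring
  have hcu'v : Commute (ι c * (u : A)) (v : A) := by
    show (ι c * (u : A)) * (v : A) = (v : A) * (ι c * (u : A))
    have hrhs : (v : A) * (ι c * (u : A)) =
        ι (σ₂ c) * ((u : A) * (v : A) * ι (ζ ^ d)) := by
      rw [← mul_assoc, hv2, mul_assoc, hvu]
    have hmid : (u : A) * (v : A) * ι (ζ ^ d) =
        ι (ζ ^ (d * b₁ * b₂)) * ((u : A) * (v : A)) := by
      rw [mul_assoc, hv2, ← mul_assoc, hu2, hζpow, mul_assoc]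
    rw [hrhs, hmid, ← mul_assoc, ← map_mul, hcrel, mul_assoc]
  have hcu'K₂ : ∀ y : K₂, Commute (ι c * (u : A)) (ι ((algebraMap K₂ L) y)) := by
    intro y
    show (ι c * (u : A)) * ι ((algebraMap K₂ L) y) = ι ((algebraMap K₂ L) y) * (ι c * (u : A))
    rw [mul_assoc, hu2, hfixσ₁, ← mul_assoc, ← map_mul, mul_comm c, map_mul, mul_assoc]
  have hcvK₁ : ∀ x : K₁, Commute (v : A) (ι ((algebraMap K₁ L) x)) := by
    intro x
    show (v : A) * ι ((algebraMap K₁ L) x) = ι ((algebraMap K₁ L) x) * (v : A)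
    rw [hv2, hfixσ₂]
  -- images of the two lifts
  have himg₁ : ∀ b : B₁, ∃ g : Fin (Module.finrank F K₁) → K₁,
      f₁ b = ∑ i, ι ((algebraMap K₁ L) (g i)) * (ι c * (u : A)) ^ (i : ℕ) := by
    intro b
    obtain ⟨g, rfl⟩ := hB₁bij.2 b
    refine ⟨g, ?_⟩
    rw [map_sum]
    refine Finset.sum_congr rfl fun i _ => ?_
    rw [map_mul, map_pow, hf₁ι, hf₁u, hj₁app]
  have himg₂ : ∀ b : B₂, ∃ g : Fin (Module.finrank F K₂) → K₂,
      f₂ b = ∑ i, ι ((algebraMap K₂ L) (g i)) * (v : A) ^ (i : ℕ) := by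
    intro b
    obtain ⟨g, rfl⟩ := hB₂bij.2 b
    refine ⟨g, ?_⟩
    rw [map_sum]
    refine Finset.sum_congr rfl fun i _ => ?_
    rw [map_mul, map_pow, hf₂ι, hf₂u, hj₂app]
  have hcomm : ∀ (b : B₁) (b' : B₂), Commute (f₁ b) (f₂ b') := by
    intro b b'
    obtain ⟨g, hg⟩ := himg₁ b
    obtain ⟨g', hg'⟩ := himg₂ b'
    rw [hg, hg']
    refine Commute.sum_left _ _ _ fun i _ => Commute.sum_right _ _ _ fun i' _ => ?_
    exact ((hcIL _ _).mul_right (((hcvK₁ (g i)).symm).pow_right _)).mul_left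
      (((hcu'K₂ (g' i')).pow_left _).mul_right ((hcu'v.pow_left _).pow_right _))
  -- the tensor product map
  let T : (B₁ ⊗[F] B₂) →ₐ[F] A := Algebra.TensorProduct.lift f₁ f₂ hcomm
  have hTmem₁ : ∀ b : B₁, f₁ b ∈ T.range := fun b =>
    ⟨b ⊗ₜ 1, by simp [T, Algebra.TensorProduct.lift_tmul]⟩
  have hTmem₂ : ∀ b : B₂, f₂ b ∈ T.range := fun b =>
    ⟨1 ⊗ₜ b, by simp [T, Algebra.TensorProduct.lift_tmul]⟩
  -- trivial intersection of the two cyclic subgroups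
  have hinf : Subgroup.zpowers σ₂ ⊓ Subgroup.zpowers σ₁ = ⊥ := by
    rw [eq_bot_iff]
    intro τ hτ
    rw [Subgroup.mem_inf] at hτ
    obtain ⟨h2', h1'⟩ := hτ
    rw [← mem_powers_iff_mem_zpowers] at h1' h2'
    obtain ⟨i, hi⟩ := h1'
    obtain ⟨j', hj⟩ := h2'
    obtain ⟨ij, hij, huniq⟩ := hGal τ
    have e1 : τ = σ₁ ^ ((⟨i % orderOf σ₁, Nat.mod_lt _ ha₁pos⟩ : Fin (orderOf σ₁)) : ℕ) *
        σ₂ ^ ((⟨0, ha₂pos⟩ : Fin (orderOf σ₂)) : ℕ) := by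
      show τ = σ₁ ^ (i % orderOf σ₁) * σ₂ ^ (0 : ℕ)
      rw [pow_zero, mul_one, pow_mod_orderOf]
      exact hi.symm
    have e2 : τ = σ₁ ^ ((⟨0, ha₁pos⟩ : Fin (orderOf σ₁)) : ℕ) *
        σ₂ ^ ((⟨j' % orderOf σ₂, Nat.mod_lt _ ha₂pos⟩ : Fin (orderOf σ₂)) : ℕ) := by
      show τ = σ₁ ^ (0 : ℕ) * σ₂ ^ (j' % orderOf σ₂)
      rw [pow_zero, one_mul, pow_mod_orderOf]
      exact hj.symm
    have heq := (huniq (⟨⟨i % orderOf σ₁, Nat.mod_lt _ ha₁pos⟩, ⟨0, ha₂pos⟩⟩ :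
        Fin (orderOf σ₁) × Fin (orderOf σ₂)) e1).trans
      (huniq (⟨⟨0, ha₁pos⟩, ⟨j' % orderOf σ₂, Nat.mod_lt _ ha₂pos⟩⟩ :
        Fin (orderOf σ₁) × Fin (orderOf σ₂)) e2).symm
    have hi0 : i % orderOf σ₁ = 0 := by
      have := congrArg (fun p => (p.1 : ℕ)) heq
      simpa using this
    rw [Subgroup.mem_bot]
    rw [e1]
    show σ₁ ^ (i % orderOf σ₁) * σ₂ ^ (0 : ℕ) = 1
    rw [hi0, pow_zero, pow_zero, mul_one]
  -- K₁ ⊔ K₂ = ⊤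
  have hsupK : K₁ ⊔ K₂ = ⊤ := by
    have hfix1 : IntermediateField.fixingSubgroup K₁ = Subgroup.zpowers σ₂ := by
      rw [hK₁, IntermediateField.fixingSubgroup_fixedField]
    have hfix2 : IntermediateField.fixingSubgroup K₂ = Subgroup.zpowers σ₁ := by
      rw [hK₂, IntermediateField.fixingSubgroup_fixedField]
    have hq : IntermediateField.fixingSubgroup (K₁ ⊔ K₂) = ⊥ := by
      rw [eq_bot_iff, ← hinf]
      refine le_inf ?_ ?_
      · rw [← hfix1]
        exact (IntermediateField.le_iff_le _ _).1
          (le_sup_left.trans (IsGalois.fixedField_fixingSubgroup (K₁ ⊔ K₂)).ge)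
      · rw [← hfix2]
        exact (IntermediateField.le_iff_le _ _).1
          (le_sup_right.trans (IsGalois.fixedField_fixingSubgroup (K₁ ⊔ K₂)).ge)
    have hbot : IntermediateField.fixedField (⊥ : Subgroup (L ≃ₐ[F] L)) = ⊤ :=
      eq_top_iff.2 ((IntermediateField.le_iff_le _ _).2 bot_le)
    rw [← IsGalois.fixedField_fixingSubgroup (K₁ ⊔ K₂), hq, hbot]
  -- all of ι(L) lies in the range of T
  have hLS : ∀ x : L, ι x ∈ T.range := by
    have h1 : K₁.toSubalgebra ≤ T.range.comap ι := by
      rintro x hx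
      have := hTmem₁ (ι₁ ⟨x, hx⟩)
      rw [hf₁ι, hj₁app] at this
      exact this
    have h2 : K₂.toSubalgebra ≤ T.range.comap ι := by
      rintro x hx
      have := hTmem₂ (ι₂ ⟨x, hx⟩)
      rw [hf₂ι, hj₂app] at this
      exact this
    have htop : K₁.toSubalgebra ⊔ K₂.toSubalgebra = ⊤ := by
      rw [← IntermediateField.sup_toSubalgebra_of_left, hsupK,
        IntermediateField.top_toSubalgebra]
    intro x
    have hx : x ∈ K₁.toSubalgebra ⊔ K₂.toSubalgebra := htop ▸ Algebra.mem_top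
    exact (sup_le h1 h2) hx
  -- the generators lie in the range
  have hu'S : ι c * (u : A) ∈ T.range := by
    have := hTmem₁ (↑u₁)
    rwa [hf₁u] at this
  have huS : (u : A) ∈ T.range := by
    have h1 : ι c⁻¹ * (ι c * (u : A)) = (u : A) := by
      rw [← mul_assoc, ← map_mul, inv_mul_cancel₀ hc0, map_one, one_mul]
    exact h1 ▸ mul_mem (hLS c⁻¹) hu'S
  have hvS : (v : A) ∈ T.range := by
    have := hTmem₂ (↑u₂)
    rwa [hf₂u] at this
  have hTsurj : Function.Surjective T := by
    intro a
    obtain ⟨g, rfl⟩ := hAbij.2 a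
    have hmem : (∑ ij, ι (g ij) * (u : A) ^ (ij.1 : ℕ) * (v : A) ^ (ij.2 : ℕ)) ∈ T.range :=
      sum_mem fun ij _ => mul_mem (mul_mem (hLS _) (pow_mem huS _)) (pow_mem hvS _)
    exact hmem
  -- dimension count
  have hAbij' : Function.Bijective (fun f : Fin (orderOf σ₁) × Fin (orderOf σ₂) → L =>
      ∑ ij, ι (f ij) * ((u : A) ^ (ij.1 : ℕ) * (v : A) ^ (ij.2 : ℕ))) := by
    simp only [← mul_assoc]
    exact hAbij
  obtain ⟨eA⟩ := basis_equiv_aux ι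
    (fun ij : Fin (orderOf σ₁) × Fin (orderOf σ₂) => (u : A) ^ (ij.1 : ℕ) * (v : A) ^ (ij.2 : ℕ))
    hAbij'
  obtain ⟨e₁⟩ := basis_equiv_aux ι₁ (fun i : Fin (Module.finrank F K₁) => (u₁ : B₁) ^ (i : ℕ))
    hB₁bij
  obtain ⟨e₂⟩ := basis_equiv_aux ι₂ (fun i : Fin (Module.finrank F K₂) => (u₂ : B₂) ^ (i : ℕ))
    hB₂bij
  haveI : Module.Finite F A := Module.Finite.equiv eA
  haveI : Module.Finite F B₁ := Module.Finite.equiv e₁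
  haveI : Module.Finite F B₂ := Module.Finite.equiv e₂
  have hrA : Module.finrank F A =
      (orderOf σ₁ * orderOf σ₂) * (orderOf σ₁ * orderOf σ₂) := by
    rw [← eA.finrank_eq, Module.finrank_pi_fintype, Finset.sum_const, Finset.card_univ,
      Fintype.card_prod, Fintype.card_fin, Fintype.card_fin, smul_eq_mul, hrankL]
  have hrB₁ : Module.finrank F B₁ = orderOf σ₁ * orderOf σ₁ := by
    rw [← e₁.finrank_eq, Module.finrank_pi_fintype, Finset.sum_const, Finset.card_univ,
      Fintype.card_fin, smul_eq_mul, hrankK₁]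
  have hrB₂ : Module.finrank F B₂ = orderOf σ₂ * orderOf σ₂ := by
    rw [← e₂.finrank_eq, Module.finrank_pi_fintype, Finset.sum_const, Finset.card_univ,
      Fintype.card_fin, smul_eq_mul, hrankK₂]
  have hdim : Module.finrank F (B₁ ⊗[F] B₂) = Module.finrank F A := by
    rw [Module.finrank_tensorProduct, hrB₁, hrB₂, hrA]
    ring
  have hTinj : Function.Injective T := by
    have := (LinearMap.injective_iff_surjective_of_finrank_eq_finrank
      (f := T.toLinearMap) hdim).2 hTsurj
    exact this
  exact ⟨(AlgEquiv.ofBijective T ⟨hTinj, hTsurj⟩).symm⟩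
end
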